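/- Let ε ∈ (0,1), let n, d be positive integers, and let X = (x^1,…,x^n) be a sequence in [0,1)^d. Let x* ∈ [0,1]^d satisfy δ(x*) = sup_{x∈[0,1]^d} δ(x) and assume V_{x*} ≥ ε. Let ε' ∈ (0,1) and let R be a positive integer with R ≥ |ln(ε')| · |ln(1 − ε^d/d!)|^{−1}. If r^1,…,r^R ∈ [0,1]^d are sampled independently with respect to the Lebesgue measure λ^d and δ^R := max_{i=1,…,R} δ(r^i), then δ(x*) − δ^R ≤ ε holds with probability at least 1 − ε'. -/

import Mathlib

open Finset MeasureTheory

noncomputable def starVol {d : ℕ} (y : Fin d → ℝ) : ℝ := ∏ j, y j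

noncomputable def countOpen {n d : ℕ} (X : Fin n → Fin d → ℝ) (y : Fin d → ℝ) : ℕ :=
  (Finset.univ.filter fun i => ∀ j, X i j < y j).card

/-- δ(y) = V_y - A(y,X)/n -/
noncomputable def delta {n d : ℕ} (X : Fin n → Fin d → ℝ) (y : Fin d → ℝ) : ℝ :=
  starVol y - (countOpen X y : ℝ) / n

open scoped ENNReal

lemma prod_sub_prod_le {ι : Type*} [DecidableEq ι] (s : Finset ι) (f g : ι → ℝ)
    (hg0 : ∀ j, 0 ≤ g j) (hgf : ∀ j, g j ≤ f j) (hf1 : ∀ j, f j ≤ 1) :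
    ∏ j ∈ s, f j - ∏ j ∈ s, g j ≤ ∑ j ∈ s, (f j - g j) := by
  induction s using Finset.induction_on with
  | empty => simp
  | @insert a s ha ih =>
    rw [Finset.prod_insert ha, Finset.prod_insert ha, Finset.sum_insert ha]
    have h0 : ∀ j, 0 ≤ f j := fun j => le_trans (hg0 j) (hgf j)
    have hg1 : ∀ j, g j ≤ 1 := fun j => le_trans (hgf j) (hf1 j)
    have hPQ : ∏ j ∈ s, g j ≤ ∏ j ∈ s, f j := by
      apply Finset.prod_le_prod
      · intro j _; exact hg0 j
      · intro j _; exact hgf j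
    have hQ0 : 0 ≤ ∏ j ∈ s, g j := Finset.prod_nonneg fun j _ => hg0 j
    have hQ1 : ∏ j ∈ s, g j ≤ 1 := Finset.prod_le_one (fun j _ => hg0 j) (fun j _ => hg1 j)
    have hP1 : ∏ j ∈ s, f j ≤ 1 := Finset.prod_le_one (fun j _ => h0 j) (fun j _ => hf1 j)
    nlinarith [hgf a, hg0 a, hf1 a, ih]

lemma mp_pi {d : ℕ} {f : Fin d → ℝ → ℝ}
    (hf : ∀ j, MeasurePreserving (f j) volume volume) :
    MeasurePreserving (fun (x : Fin d → ℝ) j => f j (x j)) volume volume := by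
  have := measurePreserving_pi (fun _ : Fin d => (volume : Measure ℝ))
    (fun _ => volume) hf
  rwa [← volume_pi] at this

lemma log_pow_le {q ε' : ℝ} (hq0 : 0 < q) (hq1 : q < 1) (hε'0 : 0 < ε') (hε'1 : ε' < 1)
    {R : ℕ} (hR : |Real.log ε'| * |Real.log (1 - q)|⁻¹ ≤ (R : ℝ)) : (1 - q) ^ R ≤ ε' := by
  have h1q : 0 < 1 - q := by linarith
  have hlogq : Real.log (1 - q) < 0 := Real.log_neg h1q (by linarith)
  have hlogε : Real.log ε' < 0 := Real.log_neg hε'0 hε'1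
  rw [abs_of_neg hlogε, abs_of_neg hlogq] at hR
  have h2 : -Real.log ε' ≤ (R : ℝ) * (-Real.log (1 - q)) := by
    rw [← div_le_iff₀ (by linarith : (0:ℝ) < -Real.log (1 - q))] at *
    simpa [div_eq_mul_inv] using hR
  have h3 : Real.log ((1 - q) ^ R) ≤ Real.log ε' := by
    rw [Real.log_pow]; linarith
  exact (Real.log_le_log_iff (pow_pos h1q R) hε'0).mp h3

lemma simplex_vol {d : ℕ} (hd : 0 < d) {c : ℝ} (hc : 0 < c) :
    ENNReal.ofReal (c ^ d / d.factorial) ≤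
      volume {t : Fin d → ℝ | (∀ j, 0 ≤ t j) ∧ ∑ j, t j ≤ c} := by
  haveI : Nonempty (Fin d) := ⟨⟨0, hd⟩⟩
  set T : Set (Fin d → ℝ) := {t | (∀ j, 0 ≤ t j) ∧ ∑ j, t j ≤ c} with hT
  have hTm : MeasurableSet T := by
    have : T = (⋂ j, (fun t : Fin d → ℝ => t j) ⁻¹' Set.Ici 0) ∩
        ((fun t : Fin d → ℝ => ∑ j, t j) ⁻¹' Set.Iic c) := by
      ext t; simp [hT, Set.mem_iInter]
    rw [this]
    exact (MeasurableSet.iInter fun j =>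
        (measurable_pi_apply j) measurableSet_Ici).inter
      ((Finset.measurable_sum univ fun j _ => measurable_pi_apply j) measurableSet_Iic)
  set B : Set (Fin d → ℝ) := {x | ∑ i, |x i| ≤ c} with hB
  have hvolB : volume B = ENNReal.ofReal c ^ d *
      ENNReal.ofReal (2 ^ d / d.factorial) := by
    have h := MeasureTheory.volume_sum_rpow_le (ι := Fin d) (p := 1) le_rfl c
    have hset : {x : Fin d → ℝ | (∑ i, |x i| ^ (1:ℝ)) ^ (1/(1:ℝ)) ≤ c} = B := by
      ext x; simp only [hB, Set.mem_setOf_eq, Real.rpow_one]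
      norm_num
    rw [hset, Fintype.card_fin] at h
    rw [h, show (1:ℝ)/1 + 1 = 2 by norm_num, Real.Gamma_two, mul_one,
      show ((d:ℝ)/1 + 1) = ((d:ℕ):ℝ) + 1 by push_cast; ring,
      Real.Gamma_nat_eq_factorial]
  have hcover : B ⊆ ⋃ e : Fin d → Bool,
      (fun (x : Fin d → ℝ) j => if e j = true then -(x j) else x j) ⁻¹' T := by
    intro x hx
    refine Set.mem_iUnion.mpr ⟨fun j => decide (x j < 0), ?_⟩
    have habs : ∀ j, (if decide (x j < 0) = true then -(x j) else x j) = |x j| := by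
      intro j
      simp only [decide_eq_true_eq]
      rcases lt_or_ge (x j) 0 with h | h
      · rw [if_pos h, abs_of_neg h]
      · rw [if_neg (not_lt.mpr h), abs_of_nonneg h]
    refine ⟨fun j => ?_, ?_⟩
    · show 0 ≤ if decide (x j < 0) = true then -(x j) else x j
      rw [habs j]; exact abs_nonneg _
    · show ∑ j, (if decide (x j < 0) = true then -(x j) else x j) ≤ c
      calc ∑ j, (if decide (x j < 0) = true then -(x j) else x j)
            = ∑ j, |x j| := by simp_rw [habs]
          _ ≤ c := hx
  have hpre : ∀ e : Fin d → Bool,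
      volume ((fun (x : Fin d → ℝ) j => if e j = true then -(x j) else x j) ⁻¹' T)
        = volume T := by
    intro e
    have hmp : MeasurePreserving
        (fun (x : Fin d → ℝ) j => if e j = true then -(x j) else x j) volume volume := by
      refine mp_pi (f := fun j t => if e j = true then -t else t) (fun j => ?_)
      by_cases h : e j = true
      · simp only [h, if_true]
        exact Measure.measurePreserving_neg (volume : Measure ℝ)
      · simp only [h, if_false]
        exact MeasurePreserving.id (volume : Measure ℝ)
    exact hmp.measure_preimage hTm.nullMeasurableSet
  have hle : volume B ≤ 2 ^ d * volume T := by
    calc volume B ≤ ∑ e : Fin d → Bool,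
        volume ((fun (x : Fin d → ℝ) j => if e j = true then -(x j) else x j) ⁻¹' T) :=
      (measure_mono hcover).trans (measure_iUnion_fintype_le _ _)
    _ = ∑ _e : Fin d → Bool, volume T := by simp_rw [hpre]
    _ = 2 ^ d * volume T := by
        rw [Finset.sum_const, Finset.card_univ, Fintype.card_fun]
        simp [nsmul_eq_mul]
  have e2 : ENNReal.ofReal (c ^ d / d.factorial) * 2 ^ d = volume B := by
    have h2d : ((2:ℝ≥0∞) ^ d) = ENNReal.ofReal (2 ^ d) := by
      rw [ENNReal.ofReal_pow (by norm_num : (0:ℝ) ≤ 2)]; norm_num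
    rw [hvolB, ← ENNReal.ofReal_pow hc.le, h2d,
      ← ENNReal.ofReal_mul (by positivity), ← ENNReal.ofReal_mul (by positivity)]
    congr 1
    ring
  have key : ENNReal.ofReal (c ^ d / d.factorial) * 2 ^ d ≤ volume T * 2 ^ d := by
    rw [e2, mul_comm (volume T)]
    exact hle
  exact (ENNReal.mul_le_mul_iff_left (pow_ne_zero d two_ne_zero)
    (ENNReal.pow_ne_top ENNReal.ofNat_ne_top)).mp key

lemma delta_close {n d : ℕ} (hn : 0 < n) (X : Fin n → Fin d → ℝ)
    (xs : Fin d → ℝ) (hxs : ∀ j, xs j ∈ Set.Icc (0:ℝ) 1) {ε : ℝ} (hε0 : 0 < ε)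
    (hV : ε ≤ starVol xs) (y : Fin d → ℝ)
    (hy : (∀ j, 0 ≤ xs j - y j) ∧ ∑ j, (xs j - y j) ≤ ε) :
    y ∈ Set.Icc (0 : Fin d → ℝ) 1 ∧ delta X xs - delta X y ≤ ε := by
  have hxsV : ∀ j, starVol xs ≤ xs j := by
    intro j
    have h1 : xs j * ∏ k ∈ Finset.univ.erase j, xs k = ∏ k, xs k :=
      Finset.mul_prod_erase Finset.univ xs (Finset.mem_univ j)
    have h2 : ∏ k ∈ Finset.univ.erase j, xs k ≤ 1 :=
      Finset.prod_le_one (fun k _ => (hxs k).1) (fun k _ => (hxs k).2)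
    have h3 : 0 ≤ xs j := (hxs j).1
    calc starVol xs = xs j * ∏ k ∈ Finset.univ.erase j, xs k := by rw [starVol, ← h1]
      _ ≤ xs j * 1 := by nlinarith
      _ = xs j := mul_one _
  have h0y : ∀ j, 0 ≤ y j := by
    intro j
    have h1 : xs j - y j ≤ ∑ k, (xs k - y k) :=
      Finset.single_le_sum (fun k _ => hy.1 k) (Finset.mem_univ j)
    have := hxsV j
    linarith [hy.2]
  have hyxs : ∀ j, y j ≤ xs j := fun j => by linarith [hy.1 j]
  have hmem : y ∈ Set.Icc (0 : Fin d → ℝ) 1 := by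
    rw [Set.mem_Icc]
    constructor <;> intro j
    · exact h0y j
    · exact le_trans (hyxs j) (hxs j).2
  refine ⟨hmem, ?_⟩
  have hcount : countOpen X y ≤ countOpen X xs := by
    apply Finset.card_le_card
    intro i hi
    simp only [Finset.mem_filter] at *
    exact ⟨hi.1, fun j => lt_of_lt_of_le (hi.2 j) (hyxs j)⟩
  have hprod : starVol xs - starVol y ≤ ε := by
    have := prod_sub_prod_le Finset.univ xs y h0y hyxs (fun j => (hxs j).2)
    calc starVol xs - starVol y ≤ ∑ j, (xs j - y j) := this
      _ ≤ ε := hy.2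
  have hcdiv : (countOpen X y : ℝ) / n ≤ (countOpen X xs : ℝ) / n := by
    have hc' : (countOpen X y : ℝ) ≤ (countOpen X xs : ℝ) := by exact_mod_cast hcount
    gcongr
  simp only [delta]
  linarith


/-- If `x*` maximizes δ over `[0,1]^d`, `V_{x*} ≥ ε`, and
`R ≥ |ln ε'|·|ln(1 - ε^d/d!)|⁻¹`, then for `R` points sampled independently and uniformly
from `[0,1]^d` (i.e. with respect to the product of `R` copies of Lebesgue measure on the
cube), the maximum `δ^R` of their δ-values satisfies `δ(x*) - δ^R ≤ ε` with probability
at least `1 - ε'`. -/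
theorem stmt10 (n d : ℕ) (hn : 0 < n) (hd : 0 < d) (ε : ℝ) (hε : ε ∈ Set.Ioo (0 : ℝ) 1)
    (X : Fin n → Fin d → ℝ) (hX : ∀ i j, X i j ∈ Set.Ico (0 : ℝ) 1)
    (xs : Fin d → ℝ) (hxs : ∀ j, xs j ∈ Set.Icc (0 : ℝ) 1)
    (hmax : ∀ x : Fin d → ℝ, (∀ j, x j ∈ Set.Icc (0 : ℝ) 1) → delta X x ≤ delta X xs)
    (hV : ε ≤ starVol xs)
    (ε' : ℝ) (hε' : ε' ∈ Set.Ioo (0 : ℝ) 1)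
    (R : ℕ) (hRpos : 0 < R)
    (hR : |Real.log ε'| * |Real.log (1 - ε ^ d / (d.factorial : ℝ))|⁻¹ ≤ (R : ℝ)) :
    ENNReal.ofReal (1 - ε') ≤
      (volume.restrict (Set.univ.pi fun _ : Fin R => Set.Icc (0 : Fin d → ℝ) 1))
        {r : Fin R → Fin d → ℝ |
          delta X xs -
            Finset.univ.sup' ⟨⟨0, hRpos⟩, Finset.mem_univ _⟩ (fun i => delta X (r i)) ≤ ε} := by
  obtain ⟨hε0, hε1⟩ := hε
  obtain ⟨hε'0, hε'1⟩ := hε'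
  have hdfac : (1:ℝ) ≤ d.factorial := by
    exact_mod_cast Nat.one_le_iff_ne_zero.mpr (Nat.factorial_ne_zero d)
  set q : ℝ := ε ^ d / d.factorial with hqdef
  have hq0 : 0 < q := by positivity
  have hq1 : q < 1 :=
    lt_of_le_of_lt (div_le_self (by positivity) hdfac) (pow_lt_one₀ hε0.le hε1 hd.ne')
  set T : Set (Fin d → ℝ) := {t | (∀ j, 0 ≤ t j) ∧ ∑ j, t j ≤ ε} with hTdef
  have hTm : MeasurableSet T := by
    have : T = (⋂ j, (fun t : Fin d → ℝ => t j) ⁻¹' Set.Ici 0) ∩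
        ((fun t : Fin d → ℝ => ∑ j, t j) ⁻¹' Set.Iic ε) := by
      ext t; simp [hTdef, Set.mem_iInter]
    rw [this]
    exact (MeasurableSet.iInter fun j =>
        (measurable_pi_apply j) measurableSet_Ici).inter
      ((Finset.measurable_sum univ fun j _ => measurable_pi_apply j) measurableSet_Iic)
  set S : Set (Fin d → ℝ) := (fun y => xs - y) ⁻¹' T with hSdef
  have hmpS : MeasurePreserving (fun y : Fin d → ℝ => xs - y) volume volume := by
    exact mp_pi (f := fun j t => xs j - t)
      (fun j => Measure.measurePreserving_sub_left volume (xs j))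
  have hSm : MeasurableSet S := hmpS.measurable hTm
  have hvolS : volume S = volume T := hmpS.measure_preimage hTm.nullMeasurableSet
  have hvolT : ENNReal.ofReal q ≤ volume T := by
    simpa [hqdef, hTdef] using simplex_vol hd hε0
  have hSprop : ∀ y ∈ S, y ∈ Set.Icc (0 : Fin d → ℝ) 1 ∧ delta X xs - delta X y ≤ ε := by
    intro y hy
    exact delta_close hn X xs hxs hε0 hV y hy
  set cube := Set.Icc (0 : Fin d → ℝ) 1 with hcube
  have hcubeM : MeasurableSet cube := measurableSet_Icc
  have hvolcube : volume cube = 1 := by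
    rw [hcube, Real.volume_Icc_pi]; simp
  have hScube : S ⊆ cube := fun y hy => (hSprop y hy).1
  have hSfin : volume S ≠ ⊤ := by
    refine ne_of_lt (lt_of_le_of_lt (measure_mono hScube) ?_)
    rw [hvolcube]; exact ENNReal.one_lt_top
  have hvolD : volume (cube \ S) ≤ ENNReal.ofReal (1 - q) := by
    rw [measure_diff hScube hSm.nullMeasurableSet hSfin, hvolcube, hvolS]
    calc 1 - volume T ≤ 1 - ENNReal.ofReal q := tsub_le_tsub_left hvolT 1
      _ = ENNReal.ofReal (1 - q) := by
          rw [ENNReal.ofReal_sub _ hq0.le, ENNReal.ofReal_one]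
  set C := Set.univ.pi fun _ : Fin R => cube with hC
  set E := {r : Fin R → Fin d → ℝ |
      delta X xs -
        Finset.univ.sup' ⟨⟨0, hRpos⟩, Finset.mem_univ _⟩ (fun i => delta X (r i)) ≤ ε}
    with hE
  have hCm : MeasurableSet C := MeasurableSet.univ_pi fun _ => hcubeM
  have hEc : Eᶜ ∩ C ⊆ Set.univ.pi fun _ : Fin R => cube \ S := by
    rintro r ⟨hrE, hrC⟩ i _
    refine ⟨hrC i (Set.mem_univ i), fun hriS => ?_⟩
    apply hrE
    have h1 := (hSprop _ hriS).2
    have h2 : delta X (r i) ≤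
        Finset.univ.sup' ⟨⟨0, hRpos⟩, Finset.mem_univ _⟩ (fun i => delta X (r i)) :=
      Finset.le_sup' (fun i => delta X (r i)) (Finset.mem_univ i)
    show delta X xs -
        Finset.univ.sup' ⟨⟨0, hRpos⟩, Finset.mem_univ _⟩ (fun i => delta X (r i)) ≤ ε
    linarith
  have hmuEc : (volume.restrict C) Eᶜ ≤ ENNReal.ofReal ε' := by
    rw [Measure.restrict_apply' hCm]
    calc volume (Eᶜ ∩ C) ≤ volume (Set.univ.pi fun _ : Fin R => cube \ S) :=
        measure_mono hEc
      _ = (volume (cube \ S)) ^ R := by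
          rw [volume_pi_pi]
          simp [Finset.prod_const]
      _ ≤ (ENNReal.ofReal (1 - q)) ^ R := pow_le_pow_left' hvolD R
      _ = ENNReal.ofReal ((1 - q) ^ R) := by rw [ENNReal.ofReal_pow (by linarith)]
      _ ≤ ENNReal.ofReal ε' :=
          ENNReal.ofReal_le_ofReal (log_pow_le hq0 hq1 hε'0 hε'1 hR)
  have huniv : (volume.restrict C) Set.univ = 1 := by
    rw [Measure.restrict_apply_univ, hC, volume_pi_pi]
    simp [hvolcube]
  have hsplit : (1 : ℝ≥0∞) ≤ (volume.restrict C) E + ENNReal.ofReal ε' := by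
    calc (1 : ℝ≥0∞) = (volume.restrict C) Set.univ := huniv.symm
      _ = (volume.restrict C) (E ∪ Eᶜ) := by rw [Set.union_compl_self]
      _ ≤ (volume.restrict C) E + (volume.restrict C) Eᶜ := measure_union_le E Eᶜ
      _ ≤ (volume.restrict C) E + ENNReal.ofReal ε' := add_le_add_right hmuEc _
  have hofr : ENNReal.ofReal (1 - ε') = 1 - ENNReal.ofReal ε' := by
    rw [ENNReal.ofReal_sub _ hε'0.le, ENNReal.ofReal_one]
  show ENNReal.ofReal (1 - ε') ≤ (volume.restrict C) E
  rw [hofr]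
  exact tsub_le_iff_right.mpr hsplit
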